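/- For the counterexample closed-loop system with sampled control, on each interval [t_i, t_{i+1}) one has d/dt h(x(t)) = -h(x(t_i))·exp(h(x(t_i))·(t - t_i))·‖x(t_i)‖², which is nonpositive whenever x(t_i) lies in the safe set (h(x(t_i)) ≥ 0); therefore t ↦ h(x(t)) is monotonically nonincreasing on [t_i, t_{i+1}). -/

import Mathlib

/-- explicit derivative of h along the sampled-data counterexample flow. -/
theorem stmt15 (x₁ x₂ tᵢ tnext : ℝ) :
    let hᵢ : ℝ := 1 - (x₁ ^ 2 + x₂ ^ 2)
    let X : ℝ → ℝ × ℝ := fun t =>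
      (Real.exp (hᵢ * (t - tᵢ) / 2) *
          (Real.cos (t - tᵢ) * x₁ + Real.sin (t - tᵢ) * x₂),
       Real.exp (hᵢ * (t - tᵢ) / 2) *
          (-Real.sin (t - tᵢ) * x₁ + Real.cos (t - tᵢ) * x₂))
    let H : ℝ → ℝ := fun t => 1 - ((X t).1 ^ 2 + (X t).2 ^ 2)
    (∀ t : ℝ, HasDerivAt H
        (-hᵢ * Real.exp (hᵢ * (t - tᵢ)) * (x₁ ^ 2 + x₂ ^ 2)) t) ∧
    (0 ≤ hᵢ → ∀ t : ℝ,
        -hᵢ * Real.exp (hᵢ * (t - tᵢ)) * (x₁ ^ 2 + x₂ ^ 2) ≤ 0) ∧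
    (0 ≤ hᵢ → AntitoneOn H (Set.Ico tᵢ tnext)) := by
  intro hᵢ X H
  have hH : H = fun t => 1 - Real.exp (hᵢ * (t - tᵢ)) * (x₁ ^ 2 + x₂ ^ 2) := by
    funext t
    have e2 : Real.exp (hᵢ * (t - tᵢ) / 2) ^ 2 = Real.exp (hᵢ * (t - tᵢ)) := by
      rw [← Real.exp_nat_mul]; ring_nf
    have trig := Real.sin_sq_add_cos_sq (t - tᵢ)
    simp only [H, X]
    have key : (Real.exp (hᵢ * (t - tᵢ) / 2) * (Real.cos (t - tᵢ) * x₁ + Real.sin (t - tᵢ) * x₂)) ^ 2 +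
        (Real.exp (hᵢ * (t - tᵢ) / 2) * (-Real.sin (t - tᵢ) * x₁ + Real.cos (t - tᵢ) * x₂)) ^ 2 =
        Real.exp (hᵢ * (t - tᵢ) / 2) ^ 2 * (Real.sin (t - tᵢ) ^ 2 + Real.cos (t - tᵢ) ^ 2) *
          (x₁ ^ 2 + x₂ ^ 2) := by ring
    rw [key, trig, e2, mul_one]
  have hderiv : ∀ t : ℝ, HasDerivAt H
      (-hᵢ * Real.exp (hᵢ * (t - tᵢ)) * (x₁ ^ 2 + x₂ ^ 2)) t := by
    intro t
    rw [hH]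
    have h1 : HasDerivAt (fun t : ℝ => hᵢ * (t - tᵢ)) hᵢ t := by
      simpa using ((hasDerivAt_id t).sub_const tᵢ).const_mul hᵢ
    have h2 := (h1.exp).mul_const (x₁ ^ 2 + x₂ ^ 2)
    have h3 := (h2.const_sub 1)
    refine h3.congr_deriv ?_
    ring
  refine ⟨hderiv, fun h0 t => ?_, fun h0 => ?_⟩
  · have hr : (0:ℝ) ≤ x₁ ^ 2 + x₂ ^ 2 := by positivity
    have := mul_nonneg (mul_nonneg h0 (Real.exp_pos (hᵢ * (t - tᵢ))).le) hr
    linarith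
  · apply antitoneOn_of_deriv_nonpos (convex_Ico tᵢ tnext)
    · exact fun t _ => (hderiv t).continuousAt.continuousWithinAt
    · exact fun t _ => (hderiv t).differentiableAt.differentiableWithinAt
    · intro t _
      rw [(hderiv t).deriv]
      have hr : (0:ℝ) ≤ x₁ ^ 2 + x₂ ^ 2 := by positivity
      have := mul_nonneg (mul_nonneg h0 (Real.exp_pos (hᵢ * (t - tᵢ))).le) hr
      linarith
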